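/- Let z ∈ 𝕊 have infinite order and let a ∈ 𝕊 have finite order. Then the homomorphism η : ℤ^(ℕ) → 𝕊 defined by η((n_k)) = a^{Σ_k n_k} (the value of the constant character sequence (a,a,a,…)) is continuous with respect to the supremum topology 𝒯_z ∨ 𝒯_{az} on ℤ^(ℕ). -/

import Mathlib

open Filter Topology

noncomputable section

/-- The convergent sequence `s = {0} ∪ {1/n : n ∈ ℕ}` as a subspace of `ℝ`. -/
def sSet : Set ℝ := {x : ℝ | x = 0 ∨ ∃ n : ℕ, 0 < n ∧ x = 1 / n}

/-- The natural map `s → ℤ^(ℕ)`, sending `0 ↦ 0` and `1/n ↦ e_n = single n 1`. -/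
def sMap (x : sSet) : ℕ →₀ ℤ :=
  if (x : ℝ) = 0 then 0 else Finsupp.single ⌈(1 : ℝ) / (x : ℝ)⌉₊ 1

/-- The topology of the Graev free abelian topological group `A_G(s)`, i.e. the finest
group topology on `ℤ^(ℕ)` making `sMap : s → ℤ^(ℕ)` continuous.  In Mathlib's lattice of
(group) topologies `t ≤ s` means `t` is *finer* than `s`, so the finest such group topology
is the `sInf` of the collection of all group topologies making `sMap` continuous; this
`sInf` itself makes `sMap` continuous, since `Continuous` into `t` means
`coinduced sMap _ ≤ t.toTopologicalSpace`, a condition preserved by `sInf`. -/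
def tauGT : AddGroupTopology (ℕ →₀ ℤ) :=
  sInf {t : AddGroupTopology (ℕ →₀ ℤ) | @Continuous _ _ _ t.toTopologicalSpace sMap}

/-- The topology `τ` of `A_G(s)` on `ℤ^(ℕ)`. -/
def tau : TopologicalSpace (ℕ →₀ ℤ) := tauGT.toTopologicalSpace

/-- `c₀(𝕊) = {(z_n) ∈ 𝕊^ℕ : z_n → 1}` as a subgroup of `𝕊^ℕ`. -/
def c0S : Subgroup (ℕ → Circle) where
  carrier := {u : ℕ → Circle | Tendsto u atTop (nhds 1)}
  one_mem' := tendsto_const_nhds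
  mul_mem' := fun hu hv => by simpa [Pi.mul_def] using hu.mul hv
  inv_mem' := fun hu => by simpa [Pi.inv_def] using hu.inv

/-- The group `F₀(𝕊)`: the group `c₀(𝕊)` endowed (below) with the sup-metric
`d((z_n),(w_n)) = sup_n |z_n - w_n|`. -/
def F0 : Type := c0S

instance : CommGroup F0 := inferInstanceAs (CommGroup c0S)

namespace F0

/-- The underlying sequence of an element of `F₀(𝕊)`. -/
def seq (u : F0) : ℕ → Circle := Subtype.val (p := fun u => u ∈ c0S) u

lemma seq_tendsto (u : F0) : Tendsto u.seq atTop (nhds 1) :=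
  (Subtype.prop (p := fun u => u ∈ c0S) u : _)

lemma ext {u v : F0} (h : u.seq = v.seq) : u = v :=
  Subtype.ext (p := fun u => u ∈ c0S) h

/-- Construct an element of `F₀(𝕊)` from a sequence converging to `1`. -/
def mk (u : ℕ → Circle) (hu : Tendsto u atTop (nhds 1)) : F0 :=
  Subtype.mk (p := fun u => u ∈ c0S) u hu

lemma dist_circle_le (a b : Circle) : dist a b ≤ 2 := by
  have : dist (a : ℂ) (b : ℂ) ≤ ‖(a : ℂ)‖ + ‖(b : ℂ)‖ := by
    rw [dist_eq_norm]; exact norm_sub_le _ _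
  have ha : ‖(a : ℂ)‖ = 1 := a.norm_coe
  have hb : ‖(b : ℂ)‖ = 1 := b.norm_coe
  calc dist a b = dist (a : ℂ) (b : ℂ) := rfl
    _ ≤ 2 := by rw [ha, hb] at this; linarith

lemma bddAbove_dist (u v : F0) :
    BddAbove (Set.range fun n => dist (u.seq n) (v.seq n)) := by
  refine ⟨2, ?_⟩
  rintro x ⟨n, rfl⟩
  exact dist_circle_le _ _

/-- `F₀(𝕊)` endowed with the metric `d((z_n),(w_n)) = sup_n |z_n - w_n|`. -/
instance : MetricSpace F0 where
  dist u v := ⨆ n, dist (u.seq n) (v.seq n)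
  dist_self u := by simp
  dist_comm u v := by simp only [dist_comm]
  dist_triangle u v w := by
    refine ciSup_le fun n => ?_
    calc dist (u.seq n) (w.seq n) ≤ dist (u.seq n) (v.seq n) + dist (v.seq n) (w.seq n) :=
          dist_triangle _ _ _
      _ ≤ (⨆ m, dist (u.seq m) (v.seq m)) + ⨆ m, dist (v.seq m) (w.seq m) :=
          add_le_add (le_ciSup (bddAbove_dist u v) n) (le_ciSup (bddAbove_dist v w) n)
  eq_of_dist_eq_zero := by
    intro u v h
    refine ext (funext fun n => ?_)
    have hn : dist (u.seq n) (v.seq n) ≤ 0 := h ▸ le_ciSup (bddAbove_dist u v) n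
    exact eq_of_dist_eq_zero (le_antisymm hn dist_nonneg)

lemma dist_def (u v : F0) : dist u v = ⨆ n, dist (u.seq n) (v.seq n) := rfl

end F0

/-- The monomorphism `T_z : ℤ^(ℕ) → A_G(s) × F₀(𝕊)`, `T_z((n_k)) = ((n_k), (z^{n_k})_k)`. -/
def Tz (z : Circle) (x : ℕ →₀ ℤ) : (ℕ →₀ ℤ) × F0 :=
  ⟨x, F0.mk (fun k => z ^ (x k)) (by
    have h : ∀ᶠ k in atTop, (1 : Circle) = z ^ (x k) := by
      obtain ⟨N, hN⟩ := x.support.finite_toSet.bddAbove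
      filter_upwards [eventually_ge_atTop (N + 1)] with k hk
      have hx : x k = 0 := by
        by_contra hne
        have : k ≤ N := hN (Finsupp.mem_support_iff.mpr hne)
        omega
      simp [hx]
    exact tendsto_const_nhds.congr' h)⟩

/-- The topology `𝒯_z` on `ℤ^(ℕ)` induced from `A_G(s) × F₀(𝕊)` via `T_z`,
where the first factor carries `τ` and the second the sup-metric topology. -/
def TzTop (z : Circle) : TopologicalSpace (ℕ →₀ ℤ) :=
  TopologicalSpace.induced (Tz z) (@instTopologicalSpaceProd _ _ tau inferInstance)

/- In Mathlib's lattice of topologies `t ≤ s` means `t` is *finer* than `s`; hence the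
classical supremum topology `𝒯_z ∨ 𝒯_{az}` (the least (group) topology finer than both,
i.e. the topology generated by the union of the two families of open sets) is the
lattice-theoretic infimum `TzTop z ⊓ TzTop (a * z)` below. -/


lemma circle_dist_coe (u v : Circle) : dist u v = ‖(u : ℂ) - v‖ := by
  exact Complex.dist_eq (u : ℂ) v

lemma circle_dist_mul_right (u v w : Circle) : dist (u * w) (v * w) = dist u v := by
  have h : ((u * w : Circle) : ℂ) - ((v * w : Circle) : ℂ) = ((u : ℂ) - v) * w := by
    push_cast; ring
  rw [circle_dist_coe, circle_dist_coe, h, norm_mul, Circle.norm_coe, mul_one]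

lemma circle_dist_pow_triangle (a z : Circle) (m n : ℤ) :
    dist (a ^ m) (a ^ n) ≤ dist ((a * z) ^ m) ((a * z) ^ n) + dist (z ^ m) (z ^ n) := by
  have h2 : dist (a ^ n * z ^ n) (a ^ n * z ^ m) = dist (z ^ n) (z ^ m) := by
    rw [mul_comm (a ^ n) (z ^ n), mul_comm (a ^ n) (z ^ m), circle_dist_mul_right]
  calc dist (a ^ m) (a ^ n) = dist (a ^ m * z ^ m) (a ^ n * z ^ m) :=
        (circle_dist_mul_right _ _ _).symm
    _ ≤ dist (a ^ m * z ^ m) (a ^ n * z ^ n) + dist (a ^ n * z ^ n) (a ^ n * z ^ m) :=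
        dist_triangle _ _ _
    _ = dist ((a * z) ^ m) ((a * z) ^ n) + dist (z ^ m) (z ^ n) := by
        rw [mul_zpow, mul_zpow, h2, dist_comm (z ^ n)]

lemma exists_delta (a : Circle) (r : ℕ) (hr : 0 < r) (har : a ^ r = 1) :
    ∃ δ > 0, ∀ m : ℤ, dist (a ^ m) 1 < δ → a ^ m = 1 := by
  classical
  have hmem : ∀ m : ℤ, a ^ m ∈ (Finset.range r).image (fun i => a ^ i) := by
    intro m
    have h0 : (0 : ℤ) ≤ m % r := Int.emod_nonneg m (by exact_mod_cast hr.ne')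
    have hlt : m % r < r := Int.emod_lt_of_pos m (by exact_mod_cast hr)
    have key : a ^ m = a ^ ((m % (r : ℤ)).toNat) := by
      conv_lhs => rw [← Int.emod_add_mul_ediv m (r : ℤ)]
      rw [zpow_add, zpow_mul, zpow_natCast, har, one_zpow, mul_one,
        ← zpow_natCast, Int.toNat_of_nonneg h0]
    exact Finset.mem_image.mpr ⟨(m % (r : ℤ)).toNat, Finset.mem_range.mpr ((Int.toNat_lt' hr).mpr hlt), key.symm⟩
  set T := (Finset.range r).image (fun i => a ^ i) with hT
  set F := (T.filter (fun t => t ≠ 1)).image (fun t => dist t (1 : Circle)) with hF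
  by_cases hFne : F.Nonempty
  · refine ⟨F.min' hFne, ?_, ?_⟩
    · obtain ⟨t, ht, hd⟩ := Finset.mem_image.mp (F.min'_mem hFne)
      have hp := dist_pos.mpr (Finset.mem_filter.mp ht).2
      rwa [hd] at hp
    · intro m hm
      by_contra hne
      have : dist (a ^ m) 1 ∈ F :=
        Finset.mem_image.mpr ⟨a ^ m, Finset.mem_filter.mpr ⟨hmem m, hne⟩, rfl⟩
      exact absurd (F.min'_le _ this) (not_le.mpr hm)
  · refine ⟨1, one_pos, fun m _ => ?_⟩
    by_contra hne
    exact hFne ⟨_, Finset.mem_image.mpr ⟨a ^ m, Finset.mem_filter.mpr ⟨hmem m, hne⟩, rfl⟩⟩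

lemma F0_dist_apply_le (u v : F0) (k : ℕ) : dist (u.seq k) (v.seq k) ≤ dist u v :=
  le_ciSup (F0.bddAbove_dist u v) k

set_option maxHeartbeats 1000000 in
/-- For `z ∈ 𝕊` of infinite order and `a ∈ 𝕊` of finite order, the character
`η((n_k)) = a^{Σ_k n_k}` (the constant character sequence `(a, a, …)`) is continuous for
the supremum topology `𝒯_z ∨ 𝒯_{az}`. -/
theorem eta_continuous (z a : Circle) (hz : ∀ n : ℕ, 0 < n → z ^ n ≠ 1)
    (ha : ∃ r : ℕ, 0 < r ∧ a ^ r = 1) :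
    @Continuous _ _ (TzTop z ⊓ TzTop (a * z)) _
      (fun x : ℕ →₀ ℤ => a ^ (x.sum fun _ n => n)) := by
  obtain ⟨r, hr, har⟩ := ha
  obtain ⟨δ, hδpos, hδ⟩ := exists_delta a r hr har
  have hcz : @Continuous _ _ (TzTop z) _ (fun y : ℕ →₀ ℤ => (Tz z y).2) :=
    @Continuous.comp _ _ _ (TzTop z) (@instTopologicalSpaceProd _ _ tau inferInstance) _ _ _
      (@continuous_snd _ _ tau _) (@continuous_induced_dom _ _ (Tz z) _)
  have hcaz : @Continuous _ _ (TzTop (a * z)) _ (fun y : ℕ →₀ ℤ => (Tz (a * z) y).2) :=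
    @Continuous.comp _ _ _ (TzTop (a * z)) (@instTopologicalSpaceProd _ _ tau inferInstance) _ _ _
      (@continuous_snd _ _ tau _) (@continuous_induced_dom _ _ (Tz (a * z)) _)
  refine (@continuous_iff_continuousAt _ _ (TzTop z ⊓ TzTop (a * z)) _ _).mpr fun x => ?_
  set U : Set (ℕ →₀ ℤ) :=
    {y | dist ((Tz z y).2) ((Tz z x).2) < δ / 2} ∩
      {y | dist ((Tz (a * z) y).2) ((Tz (a * z) x).2) < δ / 2} with hU
  have h1 : IsOpen[TzTop z] {y : ℕ →₀ ℤ | dist ((Tz z y).2) ((Tz z x).2) < δ / 2} :=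
    @Continuous.isOpen_preimage _ _ (TzTop z) _ _ hcz (Metric.ball ((Tz z x).2) (δ / 2)) Metric.isOpen_ball
  have h2 : IsOpen[TzTop (a * z)]
      {y : ℕ →₀ ℤ | dist ((Tz (a * z) y).2) ((Tz (a * z) x).2) < δ / 2} :=
    @Continuous.isOpen_preimage _ _ (TzTop (a * z)) _ _ hcaz (Metric.ball ((Tz (a * z) x).2) (δ / 2)) Metric.isOpen_ball
  have hUopen : IsOpen[TzTop z ⊓ TzTop (a * z)] U :=
    @IsOpen.inter _ (TzTop z ⊓ TzTop (a * z)) _ _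
      (h1.mono inf_le_left) (h2.mono inf_le_right)
  have hxU : x ∈ U := by
    constructor <;> · show dist _ _ < δ / 2; rw [dist_self]; linarith
  have hconst : ∀ y ∈ U, a ^ (y.sum fun _ n => n) = a ^ (x.sum fun _ n => n) := by
    intro y hy
    obtain ⟨hy1, hy2⟩ := hy
    have hk : ∀ k, a ^ (y k) / a ^ (x k) = 1 := by
      intro k
      have d1 : dist (z ^ (y k)) (z ^ (x k)) ≤ dist ((Tz z y).2) ((Tz z x).2) :=
        F0_dist_apply_le (Tz z y).2 (Tz z x).2 k
      have d2 : dist ((a * z) ^ (y k)) ((a * z) ^ (x k)) ≤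
          dist ((Tz (a * z) y).2) ((Tz (a * z) x).2) :=
        F0_dist_apply_le (Tz (a * z) y).2 (Tz (a * z) x).2 k
      have hlt : dist (a ^ (y k)) (a ^ (x k)) < δ :=
        lt_of_le_of_lt (circle_dist_pow_triangle a z (y k) (x k))
          (by linarith [lt_of_le_of_lt d2 hy2, lt_of_le_of_lt d1 hy1])
      have hlt' : dist (a ^ (y k - x k)) 1 < δ := by
        have e : a ^ (y k - x k) * a ^ (x k) = a ^ (y k) := by
          rw [← zpow_add]; congr 1; ring
        rw [← circle_dist_mul_right (a ^ (y k - x k)) 1 (a ^ (x k)), one_mul, e]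
        exact hlt
      rw [div_eq_mul_inv, ← zpow_sub]
      exact hδ _ hlt'
    have hdvd : (orderOf a : ℤ) ∣ (y.sum fun _ n => n) - (x.sum fun _ n => n) := by
      have hsub : ((y - x).sum fun _ n => n) = (y.sum fun _ n => n) - (x.sum fun _ n => n) :=
        Finsupp.sum_sub_index (fun _ _ _ => rfl)
      rw [← hsub, Finsupp.sum]
      refine Finset.dvd_sum fun k _ => ?_
      refine orderOf_dvd_iff_zpow_eq_one.mpr ?_
      rw [Finsupp.sub_apply, zpow_sub]
      exact hk k
    have hone : a ^ ((y.sum fun _ n => n) - (x.sum fun _ n => n)) = 1 :=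
      orderOf_dvd_iff_zpow_eq_one.mp hdvd
    have : a ^ (y.sum fun _ n => n) / a ^ (x.sum fun _ n => n) = 1 := by
      rw [div_eq_mul_inv, ← zpow_sub]; exact hone
    exact div_eq_one.mp this
  have hmem : U ∈ @nhds _ (TzTop z ⊓ TzTop (a * z)) x := @IsOpen.mem_nhds _ (TzTop z ⊓ TzTop (a * z)) x U hUopen hxU
  refine Filter.Tendsto.congr' ?_ tendsto_const_nhds
  exact Filter.eventually_of_mem hmem fun y hy => (hconst y hy).symm


end
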